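/- arXiv:1801.02756 — 8 statements merged into one kernel-verified Lean document; each statement's English description precedes it below -/
import Mathlib

section
/- Let (Λ, L) satisfy the spinor consistency relations. Define γ̄^B = Σ_C Λ_C{}^B γ^C for B = 0,1,2,3, γ̄⁵ = L γ⁵ L⁻¹, and Σ̄^A = γ̄⁵ γ̄⁰ γ̄^A for A = 1,2,3. Then for every vector Ψ ∈ ℂ⁴ and every A ∈ {1,2,3}: Σ^A Ψ = Ψ if and only if Σ̄^A (LΨ) = LΨ. -/
open Matrix Complex

noncomputable section

/-- The chiral-representation gamma matrices. -/
def γ : Fin 4 → Matrix (Fin 4) (Fin 4) ℂ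
  | 0 => !![0, 0, -1, 0; 0, 0, 0, -1; -1, 0, 0, 0; 0, -1, 0, 0]
  | 1 => !![0, 0, 0, 1; 0, 0, 1, 0; 0, -1, 0, 0; -1, 0, 0, 0]
  | 2 => !![0, 0, 0, -I; 0, 0, I, 0; 0, I, 0, 0; -I, 0, 0, 0]
  | 3 => !![0, 0, 1, 0; 0, 0, 0, -1; -1, 0, 0, 0; 0, 1, 0, 0]

/-- γ⁵ = i γ⁰γ¹γ²γ³. -/
def γ5 : Matrix (Fin 4) (Fin 4) ℂ := I • (γ 0 * γ 1 * γ 2 * γ 3)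

/-- The spin operators Σ^A = γ⁵γ⁰γ^A. -/
def SpinOp (A : Fin 4) : Matrix (Fin 4) (Fin 4) ℂ := γ5 * γ 0 * γ A

/-- The Minkowski metric matrix η = diag(1,-1,-1,-1). -/
def η : Matrix (Fin 4) (Fin 4) ℝ := !![1,0,0,0; 0,-1,0,0; 0,0,-1,0; 0,0,0,-1]

/-- A pair (Λ, L) satisfies the spinor consistency relations:
Λ is a Lorentz transformation, L is invertible,
L⁻¹ γ^A L = Σ_B Λ^A_B γ^B for each A, and γ⁰ L† γ⁰ = L⁻¹. -/
def SpinorConsistent (Λ : Matrix (Fin 4) (Fin 4) ℝ) (L : Matrix (Fin 4) (Fin 4) ℂ) : Prop :=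
  Λᵀ * η * Λ = η ∧ IsUnit L.det ∧
  (∀ A : Fin 4, L⁻¹ * γ A * L = ∑ B : Fin 4, (Λ A B : ℂ) • γ B) ∧
  γ 0 * Lᴴ * γ 0 = L⁻¹

/-- Λ_B{}^C = Σ_{D,E} η_{BD} Λ^D{}_E η^{EC}, lowering the first and raising the second index. -/
def lowerRaise (Λ : Matrix (Fin 4) (Fin 4) ℝ) (B C : Fin 4) : ℝ :=
  ∑ D, ∑ E, η B D * Λ D E * η E C

/-- With γ̄^B = Σ_C Λ_C{}^B γ^C, γ̄⁵ = L γ⁵ L⁻¹, Σ̄^A = γ̄⁵ γ̄⁰ γ̄^A: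
for every Ψ ∈ ℂ⁴ and A ∈ {1,2,3}, Σ^A Ψ = Ψ iff Σ̄^A (LΨ) = LΨ. -/
theorem spin_eigenvector_iff (Λ : Matrix (Fin 4) (Fin 4) ℝ) (L : Matrix (Fin 4) (Fin 4) ℂ)
    (h : SpinorConsistent Λ L) (Ψ : Fin 4 → ℂ) (A : Fin 4)
    (hA : A ∈ ({1, 2, 3} : Set (Fin 4))) :
    (SpinOp A).mulVec Ψ = Ψ ↔
      (let γbar : Fin 4 → Matrix (Fin 4) (Fin 4) ℂ :=
        fun B => ∑ C : Fin 4, (lowerRaise Λ C B : ℂ) • γ C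
      let γ5bar : Matrix (Fin 4) (Fin 4) ℂ := L * γ5 * L⁻¹
      let Sbar : Fin 4 → Matrix (Fin 4) (Fin 4) ℂ := fun A => γ5bar * γbar 0 * γbar A
      (Sbar A).mulVec (L.mulVec Ψ) = L.mulVec Ψ) := by
  obtain ⟨hΛ, hdet, hγ, -⟩ := h
  have hL1 : L⁻¹ * L = 1 := Matrix.nonsing_inv_mul L hdet
  have hL2 : L * L⁻¹ = 1 := Matrix.mul_nonsing_inv L hdet
  have hηη : η * η = 1 := by
    ext i j
    fin_cases i <;> fin_cases j <;>
      simp [η, Matrix.mul_apply, Fin.sum_univ_four, Matrix.one_apply,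
        Matrix.vecHead, Matrix.vecTail]
  have hM : (η * Λᵀ * η) * Λ = 1 := by
    have h1 : η * (Λᵀ * η * Λ) = 1 := by rw [hΛ, hηη]
    calc (η * Λᵀ * η) * Λ = η * (Λᵀ * η * Λ) := by
          rw [Matrix.mul_assoc, Matrix.mul_assoc, Matrix.mul_assoc]
      _ = 1 := h1
  have hMe : ∀ B D : Fin 4, (∑ C : Fin 4, (η * Λᵀ * η) B C * Λ C D)
      = if B = D then (1:ℝ) else 0 := by
    intro B D
    have := congrFun (congrFun hM B) D
    simpa [Matrix.mul_apply, Matrix.one_apply] using this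
  have hsym : ∀ i j : Fin 4, η i j = η j i := by
    intro i j
    fin_cases i <;> fin_cases j <;> simp [η, Matrix.vecHead, Matrix.vecTail]
  have hlr : ∀ B C : Fin 4, lowerRaise Λ C B = (η * Λᵀ * η) B C := by
    intro B C
    simp only [lowerRaise, Matrix.mul_apply, Matrix.transpose_apply,
      Finset.sum_mul, Finset.mul_sum]
    refine Finset.sum_congr rfl fun D _ => Finset.sum_congr rfl fun E _ => ?_
    rw [hsym C D, hsym E B]
    ring
  have key : ∀ B : Fin 4,
      (∑ C : Fin 4, (lowerRaise Λ C B : ℂ) • γ C) = L * γ B * L⁻¹ := by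
    intro B
    have h1 : L⁻¹ * (∑ C : Fin 4, (lowerRaise Λ C B : ℂ) • γ C) * L = γ B := by
      calc L⁻¹ * (∑ C : Fin 4, (lowerRaise Λ C B : ℂ) • γ C) * L
          = ∑ C : Fin 4, (lowerRaise Λ C B : ℂ) • (L⁻¹ * γ C * L) := by
            simp [Finset.mul_sum, Finset.sum_mul, Matrix.mul_smul, Matrix.smul_mul]
        _ = ∑ C : Fin 4, (lowerRaise Λ C B : ℂ) • (∑ D : Fin 4, (Λ C D : ℂ) • γ D) := by
            simp [hγ]
        _ = ∑ D : Fin 4, (∑ C : Fin 4, (lowerRaise Λ C B : ℂ) * (Λ C D : ℂ)) • γ D := by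
            simp only [Finset.smul_sum, smul_smul, Finset.sum_smul]
            rw [Finset.sum_comm]
        _ = ∑ D : Fin 4, (if B = D then (1:ℂ) else 0) • γ D := by
            refine Finset.sum_congr rfl fun D _ => ?_
            congr 1
            have hc : (∑ C : Fin 4, (lowerRaise Λ C B : ℂ) * (Λ C D : ℂ))
                = ((∑ C : Fin 4, lowerRaise Λ C B * Λ C D : ℝ) : ℂ) := by
              push_cast; rfl
            rw [hc]
            simp only [hlr, hMe B D]
            split <;> simp
        _ = γ B := by simp
    calc (∑ C : Fin 4, (lowerRaise Λ C B : ℂ) • γ C)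
        = L * (L⁻¹ * (∑ C : Fin 4, (lowerRaise Λ C B : ℂ) • γ C) * L) * L⁻¹ := by
          simp only [← Matrix.mul_assoc]
          rw [hL2, Matrix.one_mul, Matrix.mul_assoc, hL2, Matrix.mul_one]
      _ = L * γ B * L⁻¹ := by rw [h1]
  have cancel : ∀ X : Matrix (Fin 4) (Fin 4) ℂ, L⁻¹ * (L * X) = X :=
    fun X => Matrix.nonsing_inv_mul_cancel_left L X hdet
  show (SpinOp A).mulVec Ψ = Ψ ↔
    ((L * γ5 * L⁻¹) * (∑ C : Fin 4, (lowerRaise Λ C 0 : ℂ) • γ C) *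
      (∑ C : Fin 4, (lowerRaise Λ C A : ℂ) • γ C)).mulVec (L.mulVec Ψ) = L.mulVec Ψ
  have hSbar : (L * γ5 * L⁻¹) * (∑ C : Fin 4, (lowerRaise Λ C 0 : ℂ) • γ C) *
      (∑ C : Fin 4, (lowerRaise Λ C A : ℂ) • γ C) = L * SpinOp A * L⁻¹ := by
    rw [key 0, key A, SpinOp]
    simp only [Matrix.mul_assoc, cancel]
  rw [hSbar]
  have hmv : (L * SpinOp A * L⁻¹).mulVec (L.mulVec Ψ) = L.mulVec ((SpinOp A).mulVec Ψ) := by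
    rw [Matrix.mulVec_mulVec, Matrix.mul_assoc, Matrix.mul_assoc, hL1, Matrix.mul_one,
      ← Matrix.mulVec_mulVec]
  rw [hmv]
  constructor
  · intro hψ; rw [hψ]
  · intro hψ
    have := congrArg (L⁻¹.mulVec) hψ
    simpa [Matrix.mulVec_mulVec, ← Matrix.mul_assoc, hL1, Matrix.one_mulVec] using this
end
end

section
/- Let (Λ, L) satisfy the spinor consistency relations. Define γ̄^B = Σ_C Λ_C{}^B γ^C for B = 0,1,2,3, γ̄⁵ = L γ⁵ L⁻¹, and Σ̄^A = γ̄⁵ γ̄⁰ γ̄^A for A = 1,2,3. Then Σ̄^A = L Σ^A L⁻¹ for each A ∈ {1,2,3}. -/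
open Matrix Complex

noncomputable section

lemma eta_sq : η * η = 1 := by
  ext i j
  fin_cases i <;> fin_cases j <;>
    simp [η, Matrix.mul_apply, Fin.sum_univ_four, Matrix.one_apply, Matrix.vecHead, Matrix.vecTail]

lemma eta_transpose : ηᵀ = η := by
  ext i j; fin_cases i <;> fin_cases j <;> simp [η, Matrix.vecHead, Matrix.vecTail]

lemma lowerRaise_eq (Λ : Matrix (Fin 4) (Fin 4) ℝ) (C B : Fin 4) :
    lowerRaise Λ C B = (η * Λ * η) C B := by
  simp only [lowerRaise, Matrix.mul_apply, Finset.sum_mul]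
  rw [Finset.sum_comm]

lemma key_scalar (Λ : Matrix (Fin 4) (Fin 4) ℝ) (hΛ : Λᵀ * η * Λ = η) (B D : Fin 4) :
    ∑ C, lowerRaise Λ C B * Λ C D = (1 : Matrix (Fin 4) (Fin 4) ℝ) B D := by
  have h1 : η * Λᵀ * η * Λ = 1 := by
    have : η * Λᵀ * η * Λ = η * (Λᵀ * η * Λ) := by simp [Matrix.mul_assoc]
    rw [this, hΛ, eta_sq]
  have h2 : (η * Λᵀ * η * Λ) B D = ∑ C, lowerRaise Λ C B * Λ C D := by
    rw [Matrix.mul_apply]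
    refine Finset.sum_congr rfl fun C _ => ?_
    rw [lowerRaise_eq]
    have ht : η * Λᵀ * η = (η * Λ * η)ᵀ := by
      simp [Matrix.transpose_mul, eta_transpose, Matrix.mul_assoc]
    rw [ht, Matrix.transpose_apply]
  rw [← h2, h1]

lemma gammabar (Λ : Matrix (Fin 4) (Fin 4) ℝ) (L : Matrix (Fin 4) (Fin 4) ℂ)
    (h : SpinorConsistent Λ L) (B : Fin 4) :
    ∑ C : Fin 4, (lowerRaise Λ C B : ℂ) • γ C = L * γ B * L⁻¹ := by
  obtain ⟨hΛ, hL, h3, -⟩ := h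
  have hLi : L⁻¹ * L = 1 := nonsing_inv_mul L hL
  have hLi' : L * L⁻¹ = 1 := mul_nonsing_inv L hL
  set S := ∑ C : Fin 4, (lowerRaise Λ C B : ℂ) • γ C with hS
  have main : L⁻¹ * S * L = γ B := by
    rw [hS, Finset.mul_sum, Finset.sum_mul]
    have e1 : ∀ C : Fin 4, L⁻¹ * ((lowerRaise Λ C B : ℂ) • γ C) * L
        = (lowerRaise Λ C B : ℂ) • (L⁻¹ * γ C * L) := by
      intro C; simp [Matrix.mul_smul, Matrix.smul_mul]
    simp_rw [e1, h3, Finset.smul_sum, smul_smul]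
    rw [Finset.sum_comm]
    have e2 : ∀ D : Fin 4,
        ∑ C : Fin 4, ((lowerRaise Λ C B : ℂ) * (Λ C D : ℂ)) • γ D
        = (((1 : Matrix (Fin 4) (Fin 4) ℝ) B D : ℝ) : ℂ) • γ D := by
      intro D
      rw [← Finset.sum_smul, ← key_scalar Λ hΛ B D]
      norm_cast
    simp_rw [e2]
    simp [Matrix.one_apply, ite_smul, Finset.sum_ite_eq]
  calc S = (L * L⁻¹) * S * (L * L⁻¹) := by rw [hLi', one_mul, mul_one]
    _ = L * (L⁻¹ * S * L) * L⁻¹ := by simp only [Matrix.mul_assoc]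
    _ = L * γ B * L⁻¹ := by rw [main]

/-- With γ̄^B = Σ_C Λ_C{}^B γ^C, γ̄⁵ = L γ⁵ L⁻¹, Σ̄^A = γ̄⁵ γ̄⁰ γ̄^A:
Σ̄^A = L Σ^A L⁻¹ for each A ∈ {1,2,3}. -/
theorem transformed_spin_operator (Λ : Matrix (Fin 4) (Fin 4) ℝ) (L : Matrix (Fin 4) (Fin 4) ℂ)
    (h : SpinorConsistent Λ L) (A : Fin 4) (hA : A ∈ ({1, 2, 3} : Set (Fin 4))) :
    (let γbar : Fin 4 → Matrix (Fin 4) (Fin 4) ℂ :=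
      fun B => ∑ C : Fin 4, (lowerRaise Λ C B : ℂ) • γ C
    let γ5bar : Matrix (Fin 4) (Fin 4) ℂ := L * γ5 * L⁻¹
    let Sbar : Fin 4 → Matrix (Fin 4) (Fin 4) ℂ := fun A => γ5bar * γbar 0 * γbar A
    Sbar A = L * SpinOp A * L⁻¹) := by
  have hLi : L⁻¹ * L = 1 := nonsing_inv_mul L h.2.1
  have hc : ∀ M : Matrix (Fin 4) (Fin 4) ℂ, L⁻¹ * (L * M) = M := fun M => by
    rw [← Matrix.mul_assoc, hLi, one_mul]
  show (L * γ5 * L⁻¹) * (∑ C : Fin 4, (lowerRaise Λ C 0 : ℂ) • γ C) *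
      (∑ C : Fin 4, (lowerRaise Λ C A : ℂ) • γ C) = L * SpinOp A * L⁻¹
  rw [gammabar Λ L h 0, gammabar Λ L h A, SpinOp]
  simp only [Matrix.mul_assoc, hc]
end
end

section
/- For all real 𝔸, 𝔹, the matrix L(𝔸,𝔹) is invertible and the pair (Λ(𝔸,𝔹), L(𝔸,𝔹)) satisfies the spinor consistency relations: L(𝔸,𝔹)⁻¹ γ^A L(𝔸,𝔹) = Σ_B Λ(𝔸,𝔹)^A{}_B γ^B for each A ∈ {0,1,2,3}, and γ⁰ L(𝔸,𝔹)† γ⁰ = L(𝔸,𝔹)⁻¹. -/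
open Matrix Complex

noncomputable section

/-- The local Lorentz transformation Λ(𝔸,𝔹), Eq. (FT32). -/
def Λmat (A B : ℝ) : Matrix (Fin 4) (Fin 4) ℝ :=
  !![1 + (A^2 + B^2)/2, A, B, -((A^2 + B^2)/2);
     A, 1, 0, -A;
     B, 0, 1, -B;
     (A^2 + B^2)/2, A, B, 1 - (A^2 + B^2)/2]

/-- The spinor transformation matrix L(𝔸,𝔹), Eq. (FT33): the identity
except that the (1,2) entry is 𝔸 - i𝔹 and the (4,3) entry is -𝔸 - i𝔹. -/
def Lmat (A B : ℝ) : Matrix (Fin 4) (Fin 4) ℂ :=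
  !![1, (A : ℂ) - I * (B : ℂ), 0, 0;
     0, 1, 0, 0;
     0, 0, 1, 0;
     0, 0, -(A : ℂ) - I * (B : ℂ), 1]


def Linv (A B : ℝ) : Matrix (Fin 4) (Fin 4) ℂ :=
  !![1, -((A : ℂ) - I * (B : ℂ)), 0, 0;
     0, 1, 0, 0;
     0, 0, 1, 0;
     0, 0, (A : ℂ) + I * (B : ℂ), 1]

lemma Linv_mul (A B : ℝ) : Linv A B * Lmat A B = 1 := by
  ext i j
  fin_cases i <;> fin_cases j <;>
    simp [Linv, Lmat, Matrix.mul_apply, Fin.sum_univ_four, Matrix.one_apply, Matrix.vecHead, Matrix.vecTail]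

lemma LH (A B : ℝ) : (Lmat A B)ᴴ =
    !![1, 0, 0, 0;
       (A : ℂ) + I * (B : ℂ), 1, 0, 0;
       0, 0, 1, -(A : ℂ) + I * (B : ℂ);
       0, 0, 0, 1] := by
  ext i j
  fin_cases i <;> fin_cases j <;>
    simp [Lmat, Matrix.conjTranspose_apply, Matrix.vecHead, Matrix.vecTail, Complex.ext_iff]

lemma inv_eq (A B : ℝ) : (Lmat A B)⁻¹ = Linv A B :=
  Matrix.inv_eq_left_inv (Linv_mul A B)

set_option maxHeartbeats 2000000 in

/-- L(𝔸,𝔹) is invertible and (Λ(𝔸,𝔹), L(𝔸,𝔹)) satisfies the spinor consistency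
relations L⁻¹ γ^A L = Σ_B Λ^A_B γ^B and γ⁰ L† γ⁰ = L⁻¹. -/
theorem Lmat_consistency (A B : ℝ) :
    IsUnit (Lmat A B).det ∧
    (∀ C : Fin 4, (Lmat A B)⁻¹ * γ C * Lmat A B =
      ∑ D : Fin 4, ((Λmat A B C D : ℝ) : ℂ) • γ D) ∧
    γ 0 * (Lmat A B)ᴴ * γ 0 = (Lmat A B)⁻¹ := by
  refine ⟨?_, ?_, ?_⟩
  · exact Matrix.isUnit_det_of_left_inverse (Linv_mul A B)
  · intro C
    rw [inv_eq]
    fin_cases C <;>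
    · ext i j
      fin_cases i <;> fin_cases j <;>
        simp [Linv, Lmat, γ, Λmat, Matrix.mul_apply, Fin.sum_univ_four, Matrix.vecHead, Matrix.vecTail, Complex.ext_iff] <;>
        first | ring1 | (constructor <;> simp [← Complex.ofReal_pow] <;> ring1)
  · rw [inv_eq, LH]
    ext i j
    fin_cases i <;> fin_cases j <;>
      simp [Linv, γ, Matrix.mul_apply, Fin.sum_univ_four, Matrix.vecHead, Matrix.vecTail] <;> ring
end
end

section
/- Let I ⊆ ℝ be an open interval, let f, g : I → ℝ be differentiable with f(w) ≠ 0 and g(w) ≠ 0 for all w ∈ I, let m, p_x, p_y, p_v be real with p_v ≠ 0, and set μ = ½( f′/f + g′/g ). Suppose differentiable functions 𝔽₁, 𝔽₂, 𝔾₁, 𝔾₂ : I → ℂ satisfy on I the system: (i) (i p_x/f + p_y/g) 𝔾₂ + √2 μ 𝔾₁ + √2 𝔾₁′ = i m 𝔽₁; (ii) (i p_x/f − p_y/g) 𝔾₁ − i√2 p_v 𝔾₂ = i m 𝔽₂; (iii) −(i p_x/f + p_y/g) 𝔽₂ − i√2 p_v 𝔽₁ = i m 𝔾₁; (iv) (−i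 p_x/f + p_y/g) 𝔽₁ + √2 μ 𝔽₂ + √2 𝔽₂′ = i m 𝔾₂. Then 𝔾₁ and 𝔽₂ each satisfy the same decoupled first-order equation: [ i( m² f² g² + p_x² g² + p_y² f² ) + p_v f g ( g f′ + f g′ ) ] 𝔾₁ + 2 p_v f² g² 𝔾₁′ = 0, and [ i( m² f² g² + p_x² g² + p_y² f² ) + p_v f g ( g f′ + f g′ ) ] 𝔽₂ + 2 p_v f² g² 𝔽₂′ = 0. -/
open Complex

noncomputable section

private lemma dirac_key (fv gv m px py pv μv s df dg F1 F2 G1 G2 dF2 dG1 : ℂ)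
    (hf0 : fv ≠ 0) (hg0 : gv ≠ 0) (hs : s * s = 2)
    (hμ : μv = (df / fv + dg / gv) / 2)
    (e1 : (I * px / fv + py / gv) * G2 + s * μv * G1 + s * dG1 = I * m * F1)
    (e2 : (I * px / fv - py / gv) * G1 - I * (s * pv) * G2 = I * m * F2)
    (e3 : -((I * px / fv + py / gv) * F2) - I * (s * pv) * F1 = I * m * G1)
    (e4 : (-(I * px) / fv + py / gv) * F1 + s * μv * F2 + s * dF2 = I * m * G2) :
    ((I * (m^2*fv^2*gv^2 + px^2*gv^2 + py^2*fv^2) + pv*fv*gv*(gv*df + fv*dg)) * G1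
      + 2*pv*fv^2*gv^2*dG1 = 0) ∧
    ((I * (m^2*fv^2*gv^2 + px^2*gv^2 + py^2*fv^2) + pv*fv*gv*(gv*df + fv*dg)) * F2
      + 2*pv*fv^2*gv^2*dF2 = 0) := by
  rw [hμ] at e1 e4
  field_simp at e1 e2 e3 e4
  constructor
  · linear_combination (s*pv*fv*gv/2)*e1 + (-m*fv*gv)*e3 + (-I*(I*px*gv+fv*py))*e2
      + (-(pv*fv*gv*(gv*df+fv*dg)*G1/2 + pv*fv^2*gv^2*dG1)) * hs
      + (I*px^2*gv^2*G1 - (I*px*gv+fv*py)*fv*gv*s*pv*G2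
         - m*fv*gv*(I*px*gv+fv*py)*F2) * Complex.I_sq
  · linear_combination (s*pv*fv*gv/2)*e4 + (-m*fv*gv)*e2 + (I*(I*px*gv-fv*py))*e3
      + (-(pv*fv*gv*(gv*df+fv*dg)*F2/2 + pv*fv^2*gv^2*dF2)) * hs
      + (I*px^2*gv^2*F2 - (-I*px*gv+fv*py)*fv*gv*s*pv*F1
         + m*fv*gv*(I*px*gv-fv*py)*G1) * Complex.I_sq

/-- The Newman–Penrose Dirac system (i)–(iv) for the spinor component profiles
(𝔽₁,𝔽₂,𝔾₁,𝔾₂) implies that 𝔾₁ and 𝔽₂ each satisfy the same decoupled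
first-order equation. Here μ = ½(f′/f + g′/g). -/
theorem decoupling_of_dirac_system
    (U : Set ℝ) (hUopen : IsOpen U) (hUconn : U.OrdConnected)
    (f g : ℝ → ℝ)
    (hf : ∀ u ∈ U, DifferentiableAt ℝ f u) (hg : ∀ u ∈ U, DifferentiableAt ℝ g u)
    (hf0 : ∀ u ∈ U, f u ≠ 0) (hg0 : ∀ u ∈ U, g u ≠ 0)
    (m px py pv : ℝ) (hpv : pv ≠ 0)
    (μ : ℝ → ℝ) (hμ : ∀ u, μ u = (deriv f u / f u + deriv g u / g u) / 2)
    (F₁ F₂ G₁ G₂ : ℝ → ℂ)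
    (hF₁ : ∀ u ∈ U, DifferentiableAt ℝ F₁ u) (hF₂ : ∀ u ∈ U, DifferentiableAt ℝ F₂ u)
    (hG₁ : ∀ u ∈ U, DifferentiableAt ℝ G₁ u) (hG₂ : ∀ u ∈ U, DifferentiableAt ℝ G₂ u)
    (h1 : ∀ u ∈ U,
      (I * (px : ℂ) / (f u : ℂ) + (py : ℂ) / (g u : ℂ)) * G₂ u
        + ((Real.sqrt 2 * μ u : ℝ) : ℂ) * G₁ u
        + ((Real.sqrt 2 : ℝ) : ℂ) * deriv G₁ u = I * (m : ℂ) * F₁ u)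
    (h2 : ∀ u ∈ U,
      (I * (px : ℂ) / (f u : ℂ) - (py : ℂ) / (g u : ℂ)) * G₁ u
        - I * ((Real.sqrt 2 * pv : ℝ) : ℂ) * G₂ u = I * (m : ℂ) * F₂ u)
    (h3 : ∀ u ∈ U,
      -((I * (px : ℂ) / (f u : ℂ) + (py : ℂ) / (g u : ℂ)) * F₂ u)
        - I * ((Real.sqrt 2 * pv : ℝ) : ℂ) * F₁ u = I * (m : ℂ) * G₁ u)
    (h4 : ∀ u ∈ U,
      (-(I * (px : ℂ)) / (f u : ℂ) + (py : ℂ) / (g u : ℂ)) * F₁ u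
        + ((Real.sqrt 2 * μ u : ℝ) : ℂ) * F₂ u
        + ((Real.sqrt 2 : ℝ) : ℂ) * deriv F₂ u = I * (m : ℂ) * G₂ u) :
    (∀ u ∈ U,
      (I * ((m ^ 2 * (f u) ^ 2 * (g u) ^ 2 + px ^ 2 * (g u) ^ 2 + py ^ 2 * (f u) ^ 2 : ℝ) : ℂ)
          + ((pv * f u * g u * (g u * deriv f u + f u * deriv g u) : ℝ) : ℂ)) * G₁ u
        + ((2 * pv * (f u) ^ 2 * (g u) ^ 2 : ℝ) : ℂ) * deriv G₁ u = 0) ∧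
    (∀ u ∈ U,
      (I * ((m ^ 2 * (f u) ^ 2 * (g u) ^ 2 + px ^ 2 * (g u) ^ 2 + py ^ 2 * (f u) ^ 2 : ℝ) : ℂ)
          + ((pv * f u * g u * (g u * deriv f u + f u * deriv g u) : ℝ) : ℂ)) * F₂ u
        + ((2 * pv * (f u) ^ 2 * (g u) ^ 2 : ℝ) : ℂ) * deriv F₂ u = 0) := by
  have key : ∀ u ∈ U,
      ((I * ((m:ℂ)^2*((f u:ℂ))^2*((g u:ℂ))^2 + (px:ℂ)^2*((g u:ℂ))^2 + (py:ℂ)^2*((f u:ℂ))^2)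
          + (pv:ℂ)*(f u:ℂ)*(g u:ℂ)*((g u:ℂ)*((deriv f u : ℝ):ℂ) + (f u:ℂ)*((deriv g u : ℝ):ℂ))) * G₁ u
        + 2*(pv:ℂ)*((f u:ℂ))^2*((g u:ℂ))^2*(deriv G₁ u) = 0) ∧
      ((I * ((m:ℂ)^2*((f u:ℂ))^2*((g u:ℂ))^2 + (px:ℂ)^2*((g u:ℂ))^2 + (py:ℂ)^2*((f u:ℂ))^2)
          + (pv:ℂ)*(f u:ℂ)*(g u:ℂ)*((g u:ℂ)*((deriv f u : ℝ):ℂ) + (f u:ℂ)*((deriv g u : ℝ):ℂ))) * F₂ u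
        + 2*(pv:ℂ)*((f u:ℂ))^2*((g u:ℂ))^2*(deriv F₂ u) = 0) := by
    intro u hu
    have hfc : ((f u : ℝ) : ℂ) ≠ 0 := by exact_mod_cast hf0 u hu
    have hgc : ((g u : ℝ) : ℂ) ≠ 0 := by exact_mod_cast hg0 u hu
    have hs : ((Real.sqrt 2 : ℝ) : ℂ) * ((Real.sqrt 2 : ℝ) : ℂ) = 2 := by
      rw [← Complex.ofReal_mul, Real.mul_self_sqrt (by norm_num : (0:ℝ) ≤ 2)]
      norm_num
    have hμc : ((μ u : ℝ) : ℂ)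
        = (((deriv f u : ℝ) : ℂ) / ((f u : ℝ) : ℂ)
           + ((deriv g u : ℝ) : ℂ) / ((g u : ℝ) : ℂ)) / 2 := by
      have := hμ u
      push_cast [this]
      ring
    have e1 := h1 u hu
    have e2 := h2 u hu
    have e3 := h3 u hu
    have e4 := h4 u hu
    push_cast at e1 e2 e3 e4
    exact dirac_key (f u : ℂ) (g u : ℂ) (m : ℂ) (px : ℂ) (py : ℂ) (pv : ℂ)
      (μ u : ℂ) ((Real.sqrt 2 : ℝ) : ℂ) ((deriv f u : ℝ):ℂ) ((deriv g u : ℝ):ℂ)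
      (F₁ u) (F₂ u) (G₁ u) (G₂ u) (deriv F₂ u) (deriv G₁ u)
      hfc hgc hs hμc e1 e2 e3 e4
  constructor
  · intro u hu
    have E := (key u hu).1
    push_cast
    linear_combination E
  · intro u hu
    have E := (key u hu).2
    push_cast
    linear_combination E
end
end

section
/- Let k, p_v, m, p_x, p_y be real with k ≠ 0 and p_v ≠ 0, and let u be real with k·w ∈ (−π/2, π/2) for all w between 0 and u. With f(w) = cos(kw) and g(w) = cosh(kw), one has the closed-form evaluation ∫₀^u [ −i( p_x² g(w)² + p_y² f(w)² + m² f(w)² g(w)² ) − p_v f(w) g(w) ( f(w) g′(w) + g(w) f′(w) ) ] / ( 2 p_v f(w)² g(w)² ) dw = −i ( m² k u + p_x² tan(ku) + p_y² tanh(ku) ) / ( 2 k p_v ) − ½ ln( cos(ku) cosh(ku) ). -/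
open Complex intervalIntegral Real

noncomputable section

private lemma hasDerivAt_tanh' (x : ℝ) :
    HasDerivAt Real.tanh (1 / Real.cosh x ^ 2) x := by
  have h := (Real.hasDerivAt_sinh x).div (Real.hasDerivAt_cosh x) (Real.cosh_pos x).ne'
  have heq : (Real.sinh / Real.cosh) = Real.tanh :=
    funext fun y => (Real.tanh_eq_sinh_div_cosh y).symm
  rw [heq] at h
  refine h.congr_deriv ?_
  have h2 := Real.cosh_sq_sub_sinh_sq x
  field_simp
  nlinarith [Real.cosh_pos x]

/-- Closed-form evaluation of the phase integral Φ_W(0,u) inside the wave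
pulse region W, where f(w) = cos(kw) and g(w) = cosh(kw):
∫₀ᵘ φ(w) dw = −i(m²ku + p_x² tan(ku) + p_y² tanh(ku))/(2kp_v) − ½ ln(cos(ku)cosh(ku)). -/
theorem phase_integral_region_W
    (k pv m px py : ℝ) (hk : k ≠ 0) (hpv : pv ≠ 0) (u : ℝ)
    (hrange : ∀ w ∈ Set.uIcc (0 : ℝ) u, k * w ∈ Set.Ioo (-(π / 2)) (π / 2))
    (f g : ℝ → ℝ)
    (hf : ∀ w, f w = Real.cos (k * w)) (hg : ∀ w, g w = Real.cosh (k * w)) :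
    (∫ w in (0 : ℝ)..u,
        ((-(I * ((px ^ 2 * (g w) ^ 2 + py ^ 2 * (f w) ^ 2
              + m ^ 2 * (f w) ^ 2 * (g w) ^ 2 : ℝ) : ℂ))
          - ((pv * f w * g w * (f w * deriv g w + g w * deriv f w) : ℝ) : ℂ))
        / ((2 * pv * (f w) ^ 2 * (g w) ^ 2 : ℝ) : ℂ)))
      = -I * (((m ^ 2 * k * u + px ^ 2 * Real.tan (k * u) + py ^ 2 * Real.tanh (k * u))
            / (2 * k * pv) : ℝ) : ℂ)
        - ((Real.log (Real.cos (k * u) * Real.cosh (k * u)) / 2 : ℝ) : ℂ) := by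
  have hf' : f = fun w => Real.cos (k * w) := funext hf
  have hg' : g = fun w => Real.cosh (k * w) := funext hg
  subst hf' hg'
  have hkx : ∀ w : ℝ, HasDerivAt (fun x : ℝ => k * x) k w := fun w => by
    simpa using (hasDerivAt_id w).const_mul k
  have hdf : ∀ w : ℝ, HasDerivAt (fun x => Real.cos (k * x)) (-Real.sin (k * w) * k) w :=
    fun w => (Real.hasDerivAt_cos (k * w)).comp w (hkx w)
  have hdg : ∀ w : ℝ, HasDerivAt (fun x => Real.cosh (k * x)) (Real.sinh (k * w) * k) w :=
    fun w => (Real.hasDerivAt_cosh (k * w)).comp w (hkx w)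
  have hdf' : deriv (fun x => Real.cos (k * x)) = fun w => -Real.sin (k * w) * k :=
    funext fun w => (hdf w).deriv
  have hdg' : deriv (fun x => Real.cosh (k * x)) = fun w => Real.sinh (k * w) * k :=
    funext fun w => (hdg w).deriv
  simp only [hdf', hdg']
  have hcos : ∀ w ∈ Set.uIcc (0 : ℝ) u, 0 < Real.cos (k * w) := fun w hw =>
    Real.cos_pos_of_mem_Ioo (hrange w hw)
  have hcosh : ∀ w : ℝ, 0 < Real.cosh (k * w) := fun w => Real.cosh_pos _
  have hDr : ∀ w ∈ Set.uIcc (0 : ℝ) u,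
      (2 * pv * (Real.cos (k * w)) ^ 2 * (Real.cosh (k * w)) ^ 2 : ℝ) ≠ 0 := fun w hw =>
    mul_ne_zero (mul_ne_zero (mul_ne_zero two_ne_zero hpv)
      (pow_ne_zero 2 (hcos w hw).ne')) (pow_ne_zero 2 (hcosh w).ne')
  set F : ℝ → ℂ := fun w =>
    -I * (((m ^ 2 * k * w + px ^ 2 * Real.tan (k * w) + py ^ 2 * Real.tanh (k * w))
            / (2 * k * pv) : ℝ) : ℂ)
      - ((Real.log (Real.cos (k * w) * Real.cosh (k * w)) / 2 : ℝ) : ℂ) with hF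
  have key : ∀ w ∈ Set.uIcc (0 : ℝ) u,
      HasDerivAt F
        ((-(I * ((px ^ 2 * (Real.cosh (k * w)) ^ 2 + py ^ 2 * (Real.cos (k * w)) ^ 2
              + m ^ 2 * (Real.cos (k * w)) ^ 2 * (Real.cosh (k * w)) ^ 2 : ℝ) : ℂ))
          - ((pv * Real.cos (k * w) * Real.cosh (k * w) *
              (Real.cos (k * w) * (Real.sinh (k * w) * k)
               + Real.cosh (k * w) * (-Real.sin (k * w) * k)) : ℝ) : ℂ))
        / ((2 * pv * (Real.cos (k * w)) ^ 2 * (Real.cosh (k * w)) ^ 2 : ℝ) : ℂ)) w := by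
    intro w hw
    have hc := hcos w hw
    have hch := hcosh w
    have h1 : HasDerivAt (fun x : ℝ => m ^ 2 * k * x) (m ^ 2 * k) w := by
      simpa using (hasDerivAt_id w).const_mul (m ^ 2 * k)
    have h2 : HasDerivAt (fun x : ℝ => Real.tan (k * x)) (1 / Real.cos (k * w) ^ 2 * k) w :=
      (Real.hasDerivAt_tan hc.ne').comp w (hkx w)
    have h3 : HasDerivAt (fun x : ℝ => Real.tanh (k * x)) (1 / Real.cosh (k * w) ^ 2 * k) w :=
      (hasDerivAt_tanh' (k * w)).comp w (hkx w)
    have hA : HasDerivAt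
        (fun w => (m ^ 2 * k * w + px ^ 2 * Real.tan (k * w) + py ^ 2 * Real.tanh (k * w))
            / (2 * k * pv))
        ((m ^ 2 * k + (px ^ 2 * (1 / Real.cos (k * w) ^ 2 * k)
          + py ^ 2 * (1 / Real.cosh (k * w) ^ 2 * k))) / (2 * k * pv)) w := by
      have := ((h1.add ((h2.const_mul (px ^ 2)).add (h3.const_mul (py ^ 2)))).div_const
        (2 * k * pv))
      convert this using 2
      · rfl
      · rfl
      · simp only [Pi.add_apply]
        ring
    have hprod : HasDerivAt (fun x => Real.cos (k * x) * Real.cosh (k * x))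
        (-Real.sin (k * w) * k * Real.cosh (k * w)
          + Real.cos (k * w) * (Real.sinh (k * w) * k)) w := (hdf w).mul (hdg w)
    have hB : HasDerivAt
        (fun w => Real.log (Real.cos (k * w) * Real.cosh (k * w)) / 2)
        ((Real.cos (k * w) * Real.cosh (k * w))⁻¹ *
          (-Real.sin (k * w) * k * Real.cosh (k * w)
            + Real.cos (k * w) * (Real.sinh (k * w) * k)) / 2) w :=
      by
        have hl := Real.hasDerivAt_log (mul_pos hc hch).ne'
        have := (hl.comp w hprod).div_const 2
        exact this
    have hFd := ((hA.ofReal_comp.const_mul (-I)).sub hB.ofReal_comp)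
    refine hFd.congr_deriv ?_
    have hXD : ((px ^ 2 * (Real.cosh (k * w)) ^ 2 + py ^ 2 * (Real.cos (k * w)) ^ 2
              + m ^ 2 * (Real.cos (k * w)) ^ 2 * (Real.cosh (k * w)) ^ 2 : ℝ))
        / (2 * pv * (Real.cos (k * w)) ^ 2 * (Real.cosh (k * w)) ^ 2)
        = (m ^ 2 * k + (px ^ 2 * (1 / Real.cos (k * w) ^ 2 * k)
          + py ^ 2 * (1 / Real.cosh (k * w) ^ 2 * k))) / (2 * k * pv) := by
      field_simp
      ring
    have hYD : ((pv * Real.cos (k * w) * Real.cosh (k * w) *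
              (Real.cos (k * w) * (Real.sinh (k * w) * k)
               + Real.cosh (k * w) * (-Real.sin (k * w) * k)) : ℝ))
        / (2 * pv * (Real.cos (k * w)) ^ 2 * (Real.cosh (k * w)) ^ 2)
        = (Real.cos (k * w) * Real.cosh (k * w))⁻¹ *
          (-Real.sin (k * w) * k * Real.cosh (k * w)
            + Real.cos (k * w) * (Real.sinh (k * w) * k)) / 2 := by
      field_simp
      ring
    rw [← hXD, ← hYD]
    have hD : ((2 * pv * (Real.cos (k * w)) ^ 2 * (Real.cosh (k * w)) ^ 2 : ℝ) : ℂ) ≠ 0 :=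
      Complex.ofReal_ne_zero.mpr (hDr w hw)
    push_cast
    field_simp
  have hint : IntervalIntegrable (fun w =>
        ((-(I * ((px ^ 2 * (Real.cosh (k * w)) ^ 2 + py ^ 2 * (Real.cos (k * w)) ^ 2
              + m ^ 2 * (Real.cos (k * w)) ^ 2 * (Real.cosh (k * w)) ^ 2 : ℝ) : ℂ))
          - ((pv * Real.cos (k * w) * Real.cosh (k * w) *
              (Real.cos (k * w) * (Real.sinh (k * w) * k)
               + Real.cosh (k * w) * (-Real.sin (k * w) * k)) : ℝ) : ℂ))
        / ((2 * pv * (Real.cos (k * w)) ^ 2 * (Real.cosh (k * w)) ^ 2 : ℝ) : ℂ)))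
      MeasureTheory.volume 0 u := by
    apply ContinuousOn.intervalIntegrable
    apply ContinuousOn.div
    · apply Continuous.continuousOn; fun_prop
    · apply Continuous.continuousOn; fun_prop
    · intro w hw
      exact Complex.ofReal_ne_zero.mpr (hDr w hw)
  rw [intervalIntegral.integral_eq_sub_of_hasDerivAt key hint]
  simp [hF, Real.tan_zero, Real.tanh_zero, Real.cos_zero, Real.cosh_zero, Real.log_one]
end
end

section
/- Let p, q, r, s, a, p_v, m, p_x, p_y be real with p_v ≠ 0, set f(w) = p + qw and g(w) = r + sw, and let u ≥ a be such that f(w) > 0 and g(w) > 0 for all w ∈ [a, u]. Then ∫_a^u [ −i( p_x² g(w)² + p_y² f(w)² + m² f(w)² g(w)² ) − p_v f(w) g(w) ( f(w) g′(w) + g(w) f′(w) ) ] / ( 2 p_v f(w)² g(w)² ) dw = ( i (a − u) / (2 p_v) ) ( m² + p_x² / ( f(a) f(u) ) + p_y² / ( g(a) g(u) ) ) − ½ ln( f(u) g(u) / ( f(a) g(a) ) ). -/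
open Complex intervalIntegral

noncomputable section

set_option maxHeartbeats 1000000 in
/-- Closed-form evaluation of the phase integral Φ_B(a,u) in the post-wave
region B, where f(w) = p + qw and g(w) = r + sw are affine:
∫ₐᵘ φ(w) dw = (i(a−u)/(2p_v))(m² + p_x²/(f(a)f(u)) + p_y²/(g(a)g(u)))
              − ½ ln(f(u)g(u)/(f(a)g(a))). -/
theorem phase_integral_region_B
    (p q r s a pv m px py : ℝ) (hpv : pv ≠ 0)
    (f g : ℝ → ℝ)
    (hf : ∀ w, f w = p + q * w) (hg : ∀ w, g w = r + s * w)
    (u : ℝ) (hau : a ≤ u)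
    (hfpos : ∀ w ∈ Set.Icc a u, 0 < f w) (hgpos : ∀ w ∈ Set.Icc a u, 0 < g w) :
    (∫ w in a..u,
        ((-(I * ((px ^ 2 * (g w) ^ 2 + py ^ 2 * (f w) ^ 2
              + m ^ 2 * (f w) ^ 2 * (g w) ^ 2 : ℝ) : ℂ))
          - ((pv * f w * g w * (f w * deriv g w + g w * deriv f w) : ℝ) : ℂ))
        / ((2 * pv * (f w) ^ 2 * (g w) ^ 2 : ℝ) : ℂ)))
      = (I * (((a - u) / (2 * pv) : ℝ) : ℂ))
          * (((m ^ 2 + px ^ 2 / (f a * f u) + py ^ 2 / (g a * g u) : ℝ)) : ℂ)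
        - ((Real.log (f u * g u / (f a * g a)) / 2 : ℝ) : ℂ) := by
  have hfe : f = fun w => p + q * w := funext hf
  have hge : g = fun w => r + s * w := funext hg
  subst hfe hge
  simp only at hfpos hgpos ⊢
  have hdf : ∀ w : ℝ, HasDerivAt (fun w => p + q * w) q w := fun w => by
    simpa using ((hasDerivAt_id w).const_mul q).const_add p
  have hdg : ∀ w : ℝ, HasDerivAt (fun w => r + s * w) s w := fun w => by
    simpa using ((hasDerivAt_id w).const_mul s).const_add r
  have hderf : ∀ w : ℝ, deriv (fun w => p + q * w) w = q := fun w => (hdf w).deriv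
  have hderg : ∀ w : ℝ, deriv (fun w => r + s * w) w = s := fun w => (hdg w).deriv
  simp only [hderf, hderg]
  have hfa : 0 < p + q * a := hfpos a ⟨le_refl a, hau⟩
  have hga : 0 < r + s * a := hgpos a ⟨le_refl a, hau⟩
  have hfu : 0 < p + q * u := hfpos u ⟨hau, le_refl u⟩
  have hgu : 0 < r + s * u := hgpos u ⟨hau, le_refl u⟩
  -- antiderivative
  set A : ℝ → ℝ := fun w => -((m^2 * (w - a) + px^2 * ((w - a)/((p+q*a)*(p+q*w)))
      + py^2 * ((w - a)/((r+s*a)*(r+s*w)))) / (2*pv)) with hA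
  set B : ℝ → ℝ := fun w => -((Real.log (p+q*w) + Real.log (r+s*w)) / 2) with hB
  set F : ℝ → ℂ := fun w => I * (A w : ℂ) + (B w : ℂ) with hF
  set φ : ℝ → ℂ := fun w =>
      ((-(I * ((px ^ 2 * (r+s*w) ^ 2 + py ^ 2 * (p+q*w) ^ 2
              + m ^ 2 * (p+q*w) ^ 2 * (r+s*w) ^ 2 : ℝ) : ℂ))
          - ((pv * (p+q*w) * (r+s*w) * ((p+q*w) * s + (r+s*w) * q) : ℝ) : ℂ))
        / ((2 * pv * (p+q*w) ^ 2 * (r+s*w) ^ 2 : ℝ) : ℂ)) with hφ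
  have huIcc : Set.uIcc a u = Set.Icc a u := Set.uIcc_of_le hau
  have hderivF : ∀ w ∈ Set.uIcc a u, HasDerivAt F (φ w) w := by
    intro w hw
    rw [huIcc] at hw
    have hfw : 0 < p + q * w := hfpos w hw
    have hgw : 0 < r + s * w := hgpos w hw
    have hfw' : p + q * w ≠ 0 := ne_of_gt hfw
    have hgw' : r + s * w ≠ 0 := ne_of_gt hgw
    have hfa' : p + q * a ≠ 0 := ne_of_gt hfa
    have hga' : r + s * a ≠ 0 := ne_of_gt hga
    have h1 : HasDerivAt (fun w : ℝ => w - a) 1 w := (hasDerivAt_id w).sub_const a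
    have h2 : HasDerivAt (fun w => (p+q*a)*(p+q*w)) ((p+q*a)*q) w := (hdf w).const_mul _
    have h3 : HasDerivAt (fun w => (r+s*a)*(r+s*w)) ((r+s*a)*s) w := (hdg w).const_mul _
    have h2' : HasDerivAt (fun w => (w - a)/((p+q*a)*(p+q*w)))
        ((1*((p+q*a)*(p+q*w)) - (w-a)*((p+q*a)*q)) / ((p+q*a)*(p+q*w))^2) w :=
      h1.div h2 (mul_ne_zero hfa' hfw')
    have h3' : HasDerivAt (fun w => (w - a)/((r+s*a)*(r+s*w)))
        ((1*((r+s*a)*(r+s*w)) - (w-a)*((r+s*a)*s)) / ((r+s*a)*(r+s*w))^2) w :=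
      h1.div h3 (mul_ne_zero hga' hgw')
    have h2'' : HasDerivAt (fun w => (w - a)/((p+q*a)*(p+q*w))) (1/(p+q*w)^2) w := by
      convert h2' using 1
      field_simp
      ring
    have h3'' : HasDerivAt (fun w => (w - a)/((r+s*a)*(r+s*w))) (1/(r+s*w)^2) w := by
      convert h3' using 1
      field_simp
      ring
    have hmA : HasDerivAt A (-((m^2 * 1 + px^2 * (1/(p+q*w)^2)
        + py^2 * (1/(r+s*w)^2)) / (2*pv))) w := by
      exact ((((h1.const_mul (m^2)).add (h2''.const_mul (px^2))).add
        (h3''.const_mul (py^2))).div_const (2*pv)).neg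
    have hmB : HasDerivAt B (-((q/(p+q*w) + s/(r+s*w)) / 2)) w := by
      exact (((hdf w).log hfw').add ((hdg w).log hgw')).div_const 2 |>.neg
    have hFd : HasDerivAt F (I * ((-((m^2 * 1 + px^2 * (1/(p+q*w)^2)
        + py^2 * (1/(r+s*w)^2)) / (2*pv)) : ℝ) : ℂ)
        + ((-((q/(p+q*w) + s/(r+s*w)) / 2) : ℝ) : ℂ)) w :=
      (hmA.ofReal_comp.const_mul I).add hmB.ofReal_comp
    have key : (I * ((-((m^2 * 1 + px^2 * (1/(p+q*w)^2)
        + py^2 * (1/(r+s*w)^2)) / (2*pv)) : ℝ) : ℂ)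
        + ((-((q/(p+q*w) + s/(r+s*w)) / 2) : ℝ) : ℂ)) = φ w := by
      rw [hφ]
      have hE : ((2*pv*(p+q*w)^2*(r+s*w)^2 : ℝ) : ℂ) ≠ 0 :=
        Complex.ofReal_ne_zero.mpr (by positivity)
      rw [eq_div_iff hE]
      have hX : (-((m^2 * 1 + px^2 * (1/(p+q*w)^2) + py^2 * (1/(r+s*w)^2)) / (2*pv)))
          * (2*pv*(p+q*w)^2*(r+s*w)^2)
          = -(px ^ 2 * (r+s*w) ^ 2 + py ^ 2 * (p+q*w) ^ 2
              + m ^ 2 * (p+q*w) ^ 2 * (r+s*w) ^ 2) := by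
        generalize p + q * w = F at hfw' ⊢
        generalize r + s * w = G at hgw' ⊢
        field_simp
        ring
      have hY : (-((q/(p+q*w) + s/(r+s*w)) / 2)) * (2*pv*(p+q*w)^2*(r+s*w)^2)
          = -(pv * (p+q*w) * (r+s*w) * ((p+q*w) * s + (r+s*w) * q)) := by
        generalize p + q * w = F at hfw' ⊢
        generalize r + s * w = G at hgw' ⊢
        field_simp
        ring
      calc (I * ((-((m^2 * 1 + px^2 * (1/(p+q*w)^2) + py^2 * (1/(r+s*w)^2)) / (2*pv)) : ℝ) : ℂ)
            + ((-((q/(p+q*w) + s/(r+s*w)) / 2) : ℝ) : ℂ)) * ((2*pv*(p+q*w)^2*(r+s*w)^2 : ℝ) : ℂ)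
          = I * (((-((m^2 * 1 + px^2 * (1/(p+q*w)^2) + py^2 * (1/(r+s*w)^2)) / (2*pv)))
                * (2*pv*(p+q*w)^2*(r+s*w)^2) : ℝ) : ℂ)
            + (((-((q/(p+q*w) + s/(r+s*w)) / 2)) * (2*pv*(p+q*w)^2*(r+s*w)^2) : ℝ) : ℂ) := by
            push_cast; ring
        _ = _ := by rw [hX, hY]; push_cast; ring
    exact key ▸ hFd
  have hint : IntervalIntegrable φ MeasureTheory.volume a u := by
    apply ContinuousOn.intervalIntegrable
    rw [huIcc]
    apply ContinuousOn.div
    · fun_prop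
    · fun_prop
    · intro w hw
      have hfw := (hfpos w hw).ne'
      have hgw := (hgpos w hw).ne'
      simp only [Ne, Complex.ofReal_eq_zero]
      positivity
  have hval := intervalIntegral.integral_eq_sub_of_hasDerivAt hderivF hint
  rw [hφ] at hval
  rw [hval]
  have hl : Real.log ((p+q*u) * (r+s*u) / ((p+q*a) * (r+s*a)))
      = Real.log (p+q*u) + Real.log (r+s*u) - (Real.log (p+q*a) + Real.log (r+s*a)) := by
    rw [Real.log_div (by positivity) (by positivity), Real.log_mul (ne_of_gt hfu) (ne_of_gt hgu),
      Real.log_mul (ne_of_gt hfa) (ne_of_gt hga)]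
  have hfa' : p + q * a ≠ 0 := ne_of_gt hfa
  have hga' : r + s * a ≠ 0 := ne_of_gt hga
  have hfu' : p + q * u ≠ 0 := ne_of_gt hfu
  have hgu' : r + s * u ≠ 0 := ne_of_gt hgu
  have hXf : A u - A a = (a - u) / (2*pv)
      * (m^2 + px^2/((p+q*a)*(p+q*u)) + py^2/((r+s*a)*(r+s*u))) := by
    rw [hA]
    simp only
    field_simp
    ring
  have hYf : B u - B a
      = -(Real.log ((p+q*u) * (r+s*u) / ((p+q*a) * (r+s*a))) / 2) := by
    rw [hB]
    simp only
    rw [hl]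
    ring
  calc F u - F a = I * ((A u - A a : ℝ) : ℂ) + ((B u - B a : ℝ) : ℂ) := by
        rw [hF]; push_cast; ring
    _ = _ := by rw [hXf, hYf]; push_cast; ring
end
end

section
/- For real 𝔸, 𝔹, let Ψ^(x)(𝔸,𝔹) = (1+𝔸−i𝔹, 1, −1, −1+𝔸+i𝔹)ᵀ ∈ ℂ⁴. Then Σ¹ Ψ^(x)(𝔸,𝔹) − Ψ^(x)(𝔸,𝔹) = (−𝔸+i𝔹, 𝔸−i𝔹, 𝔸+i𝔹, −𝔸−i𝔹)ᵀ, and this difference is zero if and only if 𝔸 = 0 and 𝔹 = 0. In particular, whenever (𝔸,𝔹) ≠ (0,0), the initially x-polarized laboratory spinor is no longer an eigenvector of Σ¹ with eigenvalue 1 after the passage of the gravitational wave pulse. -/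
open Matrix Complex

noncomputable section

lemma g01 : γ 0 * γ 1 = !![0,1,0,0; 1,0,0,0; 0,0,0,-1; 0,0,-1,0] := by
  show (!![0, 0, -1, 0; 0, 0, 0, -1; -1, 0, 0, 0; 0, -1, 0, 0] : Matrix (Fin 4) (Fin 4) ℂ) *
      !![0, 0, 0, 1; 0, 0, 1, 0; 0, -1, 0, 0; -1, 0, 0, 0] = _
  ext i j
  fin_cases i <;> fin_cases j <;>
    simp [Matrix.mul_apply, Fin.sum_univ_four, Matrix.vecHead, Matrix.vecTail]

lemma g012 : γ 0 * γ 1 * γ 2 = !![0,0,I,0; 0,0,0,-I; I,0,0,0; 0,-I,0,0] := by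
  rw [g01]
  show _ * (!![0, 0, 0, -I; 0, 0, I, 0; 0, I, 0, 0; -I, 0, 0, 0] : Matrix (Fin 4) (Fin 4) ℂ) = _
  ext i j
  fin_cases i <;> fin_cases j <;>
    simp [Matrix.mul_apply, Fin.sum_univ_four, Matrix.vecHead, Matrix.vecTail]

lemma g5 : γ5 = !![-I*I,0,0,0; 0,-I*I,0,0; 0,0,I*I,0; 0,0,0,I*I] := by
  rw [γ5, g012]
  show I • (_ * (!![0, 0, 1, 0; 0, 0, 0, -1; -1, 0, 0, 0; 0, 1, 0, 0] : Matrix (Fin 4) (Fin 4) ℂ)) = _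
  ext i j
  fin_cases i <;> fin_cases j <;>
    simp [Matrix.mul_apply, Fin.sum_univ_four, Matrix.vecHead, Matrix.vecTail]

lemma g50 : γ5 * γ 0 = !![0,0,-1,0; 0,0,0,-1; 1,0,0,0; 0,1,0,0] := by
  rw [g5]
  show _ * (!![0, 0, -1, 0; 0, 0, 0, -1; -1, 0, 0, 0; 0, -1, 0, 0] : Matrix (Fin 4) (Fin 4) ℂ) = _
  ext i j
  fin_cases i <;> fin_cases j <;>
    simp [Matrix.mul_apply, Fin.sum_univ_four, Matrix.vecHead, Matrix.vecTail, Complex.I_mul_I]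

lemma spin1 : SpinOp 1 = !![0,1,0,0; 1,0,0,0; 0,0,0,1; 0,0,1,0] := by
  rw [SpinOp, g50]
  show _ * (!![0, 0, 0, 1; 0, 0, 1, 0; 0, -1, 0, 0; -1, 0, 0, 0] : Matrix (Fin 4) (Fin 4) ℂ) = _
  ext i j
  fin_cases i <;> fin_cases j <;>
    simp [Matrix.mul_apply, Fin.sum_univ_four, Matrix.vecHead, Matrix.vecTail]

/-- For the initially x-polarized laboratory spinor Ψ^(x)(𝔸,𝔹) in the post-wave
region: Σ¹Ψ − Ψ = (−𝔸+i𝔹, 𝔸−i𝔹, 𝔸+i𝔹, −𝔸−i𝔹)ᵀ, this difference vanishes iff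
𝔸 = 0 and 𝔹 = 0; in particular for (𝔸,𝔹) ≠ (0,0) the spinor is no longer an
eigenvector of Σ¹ with eigenvalue 1. -/
theorem x_polarization_destroyed (A B : ℝ) :
    (let Ψx : Fin 4 → ℂ := ![1 + (A : ℂ) - I * (B : ℂ), 1, -1, -1 + (A : ℂ) + I * (B : ℂ)]
    ((SpinOp 1).mulVec Ψx - Ψx =
        ![-(A : ℂ) + I * (B : ℂ), (A : ℂ) - I * (B : ℂ),
          (A : ℂ) + I * (B : ℂ), -(A : ℂ) - I * (B : ℂ)]) ∧
      ((SpinOp 1).mulVec Ψx - Ψx = 0 ↔ A = 0 ∧ B = 0) ∧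
      ((A, B) ≠ ((0 : ℝ), (0 : ℝ)) → (SpinOp 1).mulVec Ψx ≠ Ψx)) := by
  intro Ψx
  have h1 : (SpinOp 1).mulVec Ψx - Ψx =
      ![-(A : ℂ) + I * (B : ℂ), (A : ℂ) - I * (B : ℂ),
        (A : ℂ) + I * (B : ℂ), -(A : ℂ) - I * (B : ℂ)] := by
    funext i
    fin_cases i <;>
      simp [spin1, Ψx, Matrix.mulVec, dotProduct, Fin.sum_univ_four,
        Matrix.vecHead, Matrix.vecTail] <;> ring
  refine ⟨h1, ?_, ?_⟩
  · rw [h1]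
    constructor
    · intro h
      have h0 := congrFun h 0
      simp [Complex.ext_iff] at h0
      exact ⟨by nlinarith [h0.1, h0.2], by nlinarith [h0.1, h0.2]⟩
    · rintro ⟨rfl, rfl⟩
      funext i; fin_cases i <;> simp
  · intro hne heq
    apply hne
    have hz : (SpinOp 1).mulVec Ψx - Ψx = 0 := by rw [heq]; simp
    rw [h1] at hz
    have h0 := congrFun hz 0
    simp [Complex.ext_iff] at h0
    have hA : A = 0 := by nlinarith [h0.1, h0.2]
    have hB : B = 0 := by nlinarith [h0.1, h0.2]
    simp [hA, hB]
end
end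

section
/- For real 𝔸, 𝔹, let Ψ^(y)(𝔸,𝔹) = (1+i𝔸+𝔹, i, −1, −i+𝔸+i𝔹)ᵀ and Ψ^(z)(𝔸,𝔹) = (1, 0, −1, 𝔸+i𝔹)ᵀ in ℂ⁴. Then Σ² Ψ^(y)(𝔸,𝔹) − Ψ^(y)(𝔸,𝔹) = (−i𝔸−𝔹, −𝔸+i𝔹, −i𝔸+𝔹, −𝔸−i𝔹)ᵀ and Σ³ Ψ^(z)(𝔸,𝔹) − Ψ^(z)(𝔸,𝔹) = (0, 0, 0, −2(𝔸+i𝔹))ᵀ, and each of these differences is zero if and only if 𝔸 = 0 and 𝔹 = 0. In particular, whenever (𝔸,𝔹) ≠ (0,0), the initially y-polarized (respectively z-polarized) laboratory spinor is no longer an eigenvector of Σ² (respectively Σ³) with eigenvalue 1 after the passage of the gravitational wave pulse. -/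
open Matrix Complex

noncomputable section

lemma h01 : γ 0 * γ 1 = !![0,1,0,0;1,0,0,0;0,0,0,-1;0,0,-1,0] := by
  ext i j
  fin_cases i <;> fin_cases j <;>
    simp [γ, Matrix.mul_apply, Fin.sum_univ_four, Matrix.vecHead, Matrix.vecTail]

lemma h012 : γ 0 * γ 1 * γ 2 = !![0,0,I,0;0,0,0,-I;I,0,0,0;0,-I,0,0] := by
  rw [h01]; ext i j
  fin_cases i <;> fin_cases j <;>
    simp [γ, Matrix.mul_apply, Fin.sum_univ_four, Matrix.vecHead, Matrix.vecTail]

lemma h5 : γ5 = !![1,0,0,0;0,1,0,0;0,0,-1,0;0,0,0,-1] := by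
  rw [γ5, h012]; ext i j
  fin_cases i <;> fin_cases j <;>
    simp [γ, Matrix.mul_apply, Fin.sum_univ_four, Matrix.vecHead, Matrix.vecTail]

lemma h50 : γ5 * γ 0 = !![0,0,-1,0;0,0,0,-1;1,0,0,0;0,1,0,0] := by
  rw [h5]; ext i j
  fin_cases i <;> fin_cases j <;>
    simp [γ, Matrix.mul_apply, Fin.sum_univ_four, Matrix.vecHead, Matrix.vecTail]

lemma S2val : SpinOp 2 = !![0, -I, 0, 0; I, 0, 0, 0; 0, 0, 0, -I; 0, 0, I, 0] := by
  rw [SpinOp, h50]; ext i j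
  fin_cases i <;> fin_cases j <;>
    simp [γ, Matrix.mul_apply, Fin.sum_univ_four, Matrix.vecHead, Matrix.vecTail]

lemma S3val : SpinOp 3 = !![1, 0, 0, 0; 0, -1, 0, 0; 0, 0, 1, 0; 0, 0, 0, -1] := by
  rw [SpinOp, h50]; ext i j
  fin_cases i <;> fin_cases j <;>
    simp [γ, Matrix.mul_apply, Fin.sum_univ_four, Matrix.vecHead, Matrix.vecTail]

lemma AB_zero {A B : ℝ} (h : (A : ℂ) + I * (B : ℂ) = 0) : A = 0 ∧ B = 0 := by
  have hre := congrArg Complex.re h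
  have him := congrArg Complex.im h
  simp at hre him
  exact ⟨hre, him⟩

/-- For the initially y- and z-polarized laboratory spinors in the post-wave
region: Σ²Ψ^(y) − Ψ^(y) and Σ³Ψ^(z) − Ψ^(z) have the stated values, each
vanishes iff 𝔸 = 0 and 𝔹 = 0, and in particular for (𝔸,𝔹) ≠ (0,0) neither
spinor is an eigenvector of its spin operator with eigenvalue 1. -/
theorem yz_polarization_destroyed (A B : ℝ) :
    (let Ψy : Fin 4 → ℂ := ![1 + I * (A : ℂ) + (B : ℂ), I, -1, -I + (A : ℂ) + I * (B : ℂ)]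
    let Ψz : Fin 4 → ℂ := ![1, 0, -1, (A : ℂ) + I * (B : ℂ)]
    ((SpinOp 2).mulVec Ψy - Ψy =
        ![-(I * (A : ℂ)) - (B : ℂ), -(A : ℂ) + I * (B : ℂ),
          -(I * (A : ℂ)) + (B : ℂ), -(A : ℂ) - I * (B : ℂ)]) ∧
      ((SpinOp 2).mulVec Ψy - Ψy = 0 ↔ A = 0 ∧ B = 0) ∧
      ((A, B) ≠ ((0 : ℝ), (0 : ℝ)) → (SpinOp 2).mulVec Ψy ≠ Ψy) ∧
      ((SpinOp 3).mulVec Ψz - Ψz = ![0, 0, 0, -2 * ((A : ℂ) + I * (B : ℂ))]) ∧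
      ((SpinOp 3).mulVec Ψz - Ψz = 0 ↔ A = 0 ∧ B = 0) ∧
      ((A, B) ≠ ((0 : ℝ), (0 : ℝ)) → (SpinOp 3).mulVec Ψz ≠ Ψz)) := by
  intro Ψy Ψz
  have h1 : (SpinOp 2).mulVec Ψy - Ψy =
      ![-(I * (A : ℂ)) - (B : ℂ), -(A : ℂ) + I * (B : ℂ),
        -(I * (A : ℂ)) + (B : ℂ), -(A : ℂ) - I * (B : ℂ)] := by
    funext i
    fin_cases i <;>
      simp [S2val, Matrix.mulVec, dotProduct, Fin.sum_univ_four, Ψy,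
        Matrix.vecHead, Matrix.vecTail] <;>
      ring_nf <;> simp [Complex.I_sq] <;> ring
  have h4 : (SpinOp 3).mulVec Ψz - Ψz = ![0, 0, 0, -2 * ((A : ℂ) + I * (B : ℂ))] := by
    funext i
    fin_cases i <;>
      simp [S3val, Matrix.mulVec, dotProduct, Fin.sum_univ_four, Ψz,
        Matrix.vecHead, Matrix.vecTail] <;>
      ring
  have h2 : (SpinOp 2).mulVec Ψy - Ψy = 0 ↔ A = 0 ∧ B = 0 := by
    rw [h1]
    constructor
    · intro h0
      have e := congrFun h0 3
      have h' : (A : ℂ) + I * (B : ℂ) = 0 := by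
        simp at e
        linear_combination -e
      exact AB_zero h'
    · rintro ⟨hA, hB⟩
      funext i; fin_cases i <;> simp [hA, hB]
  have h5' : (SpinOp 3).mulVec Ψz - Ψz = 0 ↔ A = 0 ∧ B = 0 := by
    rw [h4]
    constructor
    · intro h0
      have e := congrFun h0 3
      have h' : (A : ℂ) + I * (B : ℂ) = 0 := by
        simp at e
        linear_combination e
      exact AB_zero h'
    · rintro ⟨hA, hB⟩
      funext i; fin_cases i <;> simp [hA, hB]
  refine ⟨h1, h2, ?_, h4, h5', ?_⟩
  · intro hne heq
    apply hne
    have h := h2.mp (by rw [heq]; simp)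
    simp [h.1, h.2]
  · intro hne heq
    apply hne
    have h := h5'.mp (by rw [heq]; simp)
    simp [h.1, h.2]
end
end
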